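/- For n ≥ 4, let P_{4,n} = {p₁,…,p_n} be the poset with relations generated by p₁ ≼ p₂ ≼ … ≼ p_{n−1} and p_{⌊n/2⌋} ≼ p_n. Then F = Σ_{i=1}^{⌊(n−1)/2⌋} E*_{p_i,p_{n−i}} + Σ_{i=1}^{⌊n/2⌋} E*_{p_i,p_n} is a Frobenius functional on g_A(P_{4,n}), and the spectrum of g_A(P_{4,n}) is binary: ad(F̂) has eigenvalues 0 and 1 each with multiplicity (n²−1)/4 when n is odd and n²/4 when n is even. -/

import Mathlib

/-!
Common definitions: for a finite poset `P`, identified with `{1,…,n}` via a linear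
extension, represented by a relation `le` on `Fin n`, the type-A Lie poset algebra
`gA le` is the Lie subalgebra of `sl(n, ℂ)` spanned by the matrix units `E p q`
for `p ≺ q` together with all trace-zero diagonal matrices (here realized as a
submodule of complex `n × n` matrices, which is closed under the commutator
bracket).  `gFull le` is the full Lie poset algebra `g(P)` (with all diagonal
matrices).  `FS S` is the functional `F_S = ∑_{(p,q) ∈ S} E*_{p,q}`.
-/

namespace LiePosets

noncomputable section

open scoped BigOperators

/-- Complex `n × n` matrices. -/
abbrev M (n : ℕ) : Type := Matrix (Fin n) (Fin n) ℂ

/-- The strict relation `p ≺ q` attached to a poset relation `le`. -/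
def Strict {n : ℕ} (le : Fin n → Fin n → Prop) (p q : Fin n) : Prop := le p q ∧ p ≠ q

/-- The type-A Lie poset algebra `g_A(P)`: trace-zero matrices supported on
relations of the poset (off-diagonal entries vanish off the strict relations). -/
def gA {n : ℕ} (le : Fin n → Fin n → Prop) : Submodule ℂ (M n) where
  carrier := {A | Matrix.trace A = 0 ∧ ∀ p q : Fin n, p ≠ q → ¬ le p q → A p q = 0}
  add_mem' := by
    rintro A B ⟨hA, hA'⟩ ⟨hB, hB'⟩
    exact ⟨by simp [hA, hB], fun p q h1 h2 => by
      simp [Matrix.add_apply, hA' p q h1 h2, hB' p q h1 h2]⟩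
  zero_mem' := ⟨by simp, fun p q _ _ => by simp⟩
  smul_mem' := by
    rintro c A ⟨hA, hA'⟩
    exact ⟨by simp [hA], fun p q h1 h2 => by
      simp [Matrix.smul_apply, hA' p q h1 h2]⟩

/-- The Lie poset algebra `g(P)` (all diagonal matrices allowed). -/
def gFull {n : ℕ} (le : Fin n → Fin n → Prop) : Submodule ℂ (M n) where
  carrier := {A | ∀ p q : Fin n, p ≠ q → ¬ le p q → A p q = 0}
  add_mem' := by
    rintro A B hA hB p q h1 h2
    simp [Matrix.add_apply, hA p q h1 h2, hB p q h1 h2]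
  zero_mem' := fun p q _ _ => by simp
  smul_mem' := by
    rintro c A hA p q h1 h2
    simp [Matrix.smul_apply, hA p q h1 h2]

/-- The functional `F_S = ∑_{(p,q) ∈ S} E*_{p,q}` reading off the sum of the
coefficients of the matrix entries indexed by `S`. -/
def FS {n : ℕ} (S : Finset (Fin n × Fin n)) : M n →ₗ[ℂ] ℂ where
  toFun A := ∑ pq ∈ S, A pq.1 pq.2
  map_add' A B := by simp [Matrix.add_apply, Finset.sum_add_distrib]
  map_smul' c A := by simp [Matrix.smul_apply, Finset.mul_sum]

/-- `F` is a Frobenius functional on the Lie subalgebra (submodule) `g`: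
the kernel of the Kirillov form `B_F(x, y) = F ⁅x, y⁆` on `g` is trivial. -/
def IsFrobeniusOn {n : ℕ} (g : Submodule ℂ (M n)) (F : M n →ₗ[ℂ] ℂ) : Prop :=
  ∀ x ∈ g, (∀ y ∈ g, F ⁅x, y⁆ = 0) → x = 0

/-- `H` is a principal element for `F` on `g`:  `B_F(H, ·) = F` on `g`. -/
def IsPrincipal {n : ℕ} (g : Submodule ℂ (M n)) (F : M n →ₗ[ℂ] ℂ) (H : M n) : Prop :=
  H ∈ g ∧ ∀ y ∈ g, F ⁅H, y⁆ = F y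

/-- The adjoint action `ad H = ⁅H, -⁆` as a linear endomorphism of matrices. -/
def adE {n : ℕ} (H : M n) : Module.End ℂ (M n) :=
  LinearMap.mulLeft ℂ H - LinearMap.mulRight ℂ H

/-- Multiplicity of `μ` as an eigenvalue of `ad H` acting on `g`. -/
def eigMult {n : ℕ} (g : Submodule ℂ (M n)) (H : M n) (μ : ℂ) : ℕ :=
  Module.finrank ℂ ↥(g ⊓ Module.End.eigenspace (adE H) μ)

/-- `g` has a binary spectrum: for any Frobenius functional `F` and corresponding
principal element `H`, the multiset of eigenvalues of `ad H` on `g` consists of an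
equal number of `0`'s and `1`'s. -/
def HasBinarySpectrum {n : ℕ} (g : Submodule ℂ (M n)) : Prop :=
  ∀ (F : M n →ₗ[ℂ] ℂ) (H : M n), IsFrobeniusOn g F → IsPrincipal g F H →
    eigMult g H 0 = eigMult g H 1 ∧
    eigMult g H 0 + eigMult g H 1 = Module.finrank ℂ ↥g

/-- The kernel of the Kirillov form `B_F` on `g`. -/
def kirKer {n : ℕ} (g : Submodule ℂ (M n)) (F : M n →ₗ[ℂ] ℂ) : Submodule ℂ (M n) where
  carrier := {x | x ∈ g ∧ ∀ y ∈ g, F ⁅x, y⁆ = 0}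
  zero_mem' := ⟨g.zero_mem, fun y _ => by simp [Ring.lie_def]⟩
  add_mem' := by
    rintro a b ⟨ha, ha'⟩ ⟨hb, hb'⟩
    exact ⟨g.add_mem ha hb, fun y hy => by
      have h1 := ha' y hy
      have h2 := hb' y hy
      simp only [Ring.lie_def, map_sub] at h1 h2 ⊢
      simp only [add_mul, mul_add, map_add]
      linear_combination h1 + h2⟩
  smul_mem' := by
    rintro c a ⟨ha, ha'⟩
    exact ⟨g.smul_mem c ha, fun y hy => by
      have h1 := ha' y hy
      simp only [Ring.lie_def, map_sub] at h1 ⊢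
      rw [smul_mul_assoc, mul_smul_comm, map_smul, map_smul, smul_eq_mul, smul_eq_mul]
      linear_combination c * h1⟩

/-- The index of the Lie algebra `g`: the minimum over all functionals of the
dimension of the kernel of the corresponding Kirillov form. -/
def lieIndex {n : ℕ} (g : Submodule ℂ (M n)) : ℕ :=
  sInf {d : ℕ | ∃ F : M n →ₗ[ℂ] ℂ, d = Module.finrank ℂ ↥(kirKer g F)}

/-- The underlying undirected graph of the directed graph `Γ_{F_S}`. -/
def gammaGraph {n : ℕ} (S : Finset (Fin n × Fin n)) : SimpleGraph (Fin n) where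
  Adj p q := p ≠ q ∧ ((p, q) ∈ S ∨ (q, p) ∈ S)
  symm := ⟨fun p q h => ⟨h.1.symm, h.2.symm⟩⟩
  loopless := ⟨fun p h => h.1 rfl⟩

/-- `F_S` is small: `S` consists of strict relations of the poset and `Γ_{F_S}`
is a spanning tree of the comparability graph. -/
def Small {n : ℕ} (le : Fin n → Fin n → Prop) (S : Finset (Fin n × Fin n)) : Prop :=
  (∀ pq ∈ S, Strict le pq.1 pq.2) ∧ (gammaGraph S).IsTree

/-- `U_{F_S}(P)`: the sinks of `Γ_{F_S}`. -/
def sinks {n : ℕ} (S : Finset (Fin n × Fin n)) : Set (Fin n) :=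
  {p | (∃ q, (q, p) ∈ S) ∧ ∀ q, (p, q) ∉ S}

/-- `D_{F_S}(P)`: the sources of `Γ_{F_S}`. -/
def sources {n : ℕ} (S : Finset (Fin n × Fin n)) : Set (Fin n) :=
  {p | (∃ q, (p, q) ∈ S) ∧ ∀ q, (q, p) ∉ S}

/-- `B_{F_S}(P)`: the vertices of `Γ_{F_S}` that are neither sinks nor sources. -/
def betweens {n : ℕ} (S : Finset (Fin n × Fin n)) : Set (Fin n) :=
  {p | (∃ q, (p, q) ∈ S) ∧ ∃ q, (q, p) ∈ S}

/-- `U` is a filter (up-closed set) of the poset. -/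
def IsPosetFilter {n : ℕ} (le : Fin n → Fin n → Prop) (U : Set (Fin n)) : Prop :=
  ∀ p ∈ U, ∀ q, le p q → q ∈ U

/-- `D` is an order ideal (down-closed set) of the poset. -/
def IsPosetIdeal {n : ℕ} (le : Fin n → Fin n → Prop) (D : Set (Fin n)) : Prop :=
  ∀ p ∈ D, ∀ q, le q p → q ∈ D

/-- Helper to build elements of `Fin n` from natural numbers. -/
def fmk (n : ℕ) (h : 0 < n) (i : ℕ) : Fin n := ⟨i % n, Nat.mod_lt _ h⟩

/-- Restriction of a matrix along an embedding of index types. -/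
def restrictMat {N K : ℕ} (f : Fin K → Fin N) (B : M N) : M K :=
  Matrix.of fun p q => B (f p) (f q)


/-! ### Auxiliary development for the solution -/

section SolutionAux

open Finset

variable {n : ℕ}

lemma FS_apply (S : Finset (Fin n × Fin n)) (A : M n) :
    FS S A = ∑ pq ∈ S, A pq.1 pq.2 := rfl

/-- Entry of a matrix read off at natural-number indices (0 when out of range). -/
def Xe (x : M n) (a b : ℕ) : ℂ :=
  if h : a < n ∧ b < n then x ⟨a, h.1⟩ ⟨b, h.2⟩ else 0

lemma Xe_eq (x : M n) {a b : ℕ} (ha : a < n) (hb : b < n) :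
    Xe x a b = x ⟨a, ha⟩ ⟨b, hb⟩ := dif_pos ⟨ha, hb⟩

/-- The concrete linear functional `F` on `P_{4,n}` written as an explicit sum. -/
def Gs (n : ℕ) (A : M n) : ℂ :=
  (∑ i ∈ Finset.range ((n - 1) / 2), Xe A i (n - 2 - i)) +
  (∑ i ∈ Finset.range (n / 2), Xe A i (n - 1))

lemma fmk_val (h0 : 0 < n) {i : ℕ} (hi : i < n) : fmk n h0 i = ⟨i, hi⟩ := by
  simp [fmk, Nat.mod_eq_of_lt hi]

lemma FS_eq (hn : 4 ≤ n) (h0 : 0 < n) (S : Finset (Fin n × Fin n))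
    (hS : S =
      ((Finset.Icc 1 ((n - 1) / 2)).image fun i =>
        (fmk n h0 (i - 1), fmk n h0 (n - i - 1))) ∪
      ((Finset.Icc 1 (n / 2)).image fun i =>
        (fmk n h0 (i - 1), fmk n h0 (n - 1)))) (A : M n) :
    FS S A = Gs n A := by
  have hIcc : ∀ K : ℕ, Finset.Icc 1 K = Finset.image (fun j => j + 1) (Finset.range K) := by
    intro K
    ext a
    simp only [Finset.mem_Icc, Finset.mem_image, Finset.mem_range]
    constructor
    · rintro ⟨h1, h2⟩; exact ⟨a - 1, by omega, by omega⟩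
    · rintro ⟨j, hj, rfl⟩; omega
  have hval : ∀ {i : ℕ}, i < n → (fmk n h0 i).val = i := by
    intro i hi; rw [fmk_val h0 hi]
  have hdisj : Disjoint
      ((Finset.Icc 1 ((n - 1) / 2)).image fun i =>
        ((fmk n h0 (i - 1), fmk n h0 (n - i - 1)) : Fin n × Fin n))
      ((Finset.Icc 1 (n / 2)).image fun i =>
        ((fmk n h0 (i - 1), fmk n h0 (n - 1)) : Fin n × Fin n)) := by
    rw [Finset.disjoint_left]
    rintro ⟨p, q⟩ h1 h2
    simp only [Finset.mem_image, Finset.mem_Icc, Prod.mk.injEq] at h1 h2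
    obtain ⟨i, ⟨hi1, hi2⟩, _, hq1⟩ := h1
    obtain ⟨j, ⟨hj1, hj2⟩, _, hq2⟩ := h2
    have e1 : q.val = n - i - 1 := by rw [← hq1]; exact hval (by omega)
    have e2 : q.val = n - 1 := by rw [← hq2]; exact hval (by omega)
    omega
  rw [FS_apply, hS, Finset.sum_union hdisj]
  have hinj1 : ∀ i ∈ Finset.Icc 1 ((n - 1) / 2), ∀ j ∈ Finset.Icc 1 ((n - 1) / 2),
      ((fmk n h0 (i - 1), fmk n h0 (n - i - 1)) : Fin n × Fin n)
        = (fmk n h0 (j - 1), fmk n h0 (n - j - 1)) → i = j := by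
    intro i hi j hj h
    simp only [Finset.mem_Icc] at hi hj
    have := congrArg (fun p : Fin n × Fin n => p.1.val) h
    simp only at this
    rw [hval (by omega), hval (by omega)] at this
    omega
  have hinj2 : ∀ i ∈ Finset.Icc 1 (n / 2), ∀ j ∈ Finset.Icc 1 (n / 2),
      ((fmk n h0 (i - 1), fmk n h0 (n - 1)) : Fin n × Fin n)
        = (fmk n h0 (j - 1), fmk n h0 (n - 1)) → i = j := by
    intro i hi j hj h
    simp only [Finset.mem_Icc] at hi hj
    have := congrArg (fun p : Fin n × Fin n => p.1.val) h
    simp only at this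
    rw [hval (by omega), hval (by omega)] at this
    omega
  rw [Finset.sum_image hinj1, Finset.sum_image hinj2]
  rw [hIcc, hIcc]
  rw [Finset.sum_image (by intro a _ b _ h; simp only at h; omega), Finset.sum_image (by intro a _ b _ h; simp only at h; omega)]
  unfold Gs
  congr 1
  · apply Finset.sum_congr rfl
    intro j hj
    simp only [Finset.mem_range] at hj
    have e1 : j + 1 - 1 = j := by omega
    have e2 : n - (j + 1) - 1 = n - 2 - j := by omega
    rw [e1, e2, fmk_val h0 (by omega), fmk_val h0 (by omega), Xe_eq A (by omega) (by omega)]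
  · apply Finset.sum_congr rfl
    intro j hj
    simp only [Finset.mem_range] at hj
    have e1 : j + 1 - 1 = j := by omega
    rw [e1, fmk_val h0 (by omega), fmk_val h0 (by omega), Xe_eq A (by omega) (by omega)]

lemma mul_E_apply (x : M n) (u v p q : Fin n) :
    (x * Matrix.single u v (1 : ℂ)) p q = if q = v then x p u else 0 := by
  rw [Matrix.mul_apply]
  by_cases h : q = v
  · subst h
    rw [if_pos rfl, Finset.sum_eq_single u]
    · rw [Matrix.single_apply_same, mul_one]
    · intro j _ hj
      rw [Matrix.single_apply_of_ne _ _ _ _ _ (fun hc => hj hc.1.symm), mul_zero]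
    · intro h; exact absurd (Finset.mem_univ u) h
  · rw [if_neg h]
    apply Finset.sum_eq_zero
    intro j _
    rw [Matrix.single_apply_of_ne _ _ _ _ _ (fun hc => h hc.2.symm), mul_zero]

lemma E_mul_apply (x : M n) (u v p q : Fin n) :
    (Matrix.single u v (1 : ℂ) * x) p q = if p = u then x v q else 0 := by
  rw [Matrix.mul_apply]
  by_cases h : p = u
  · subst h
    rw [if_pos rfl, Finset.sum_eq_single v]
    · rw [Matrix.single_apply_same, one_mul]
    · intro j _ hj
      rw [Matrix.single_apply_of_ne _ _ _ _ _ (fun hc => hj hc.2.symm), zero_mul]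
    · intro h; exact absurd (Finset.mem_univ v) h
  · rw [if_neg h]
    apply Finset.sum_eq_zero
    intro j _
    rw [Matrix.single_apply_of_ne _ _ _ _ _ (fun hc => h hc.1.symm), zero_mul]

variable {le : Fin n → Fin n → Prop}

lemma E_mem (hle : ∀ p q : Fin n, le p q ↔
      p = q ∨ (p.val < q.val ∧ (q.val ≤ n - 2 ∨ p.val < n / 2)))
    {a b : ℕ} (ha : a < n) (hb : b < n) (hab : a < b) (hrel : b ≤ n - 2 ∨ a < n / 2) :
    Matrix.single (⟨a, ha⟩ : Fin n) ⟨b, hb⟩ (1 : ℂ) ∈ gA le := by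
  constructor
  · rw [Matrix.trace]
    apply Finset.sum_eq_zero
    intro j _
    show Matrix.single (⟨a, ha⟩ : Fin n) ⟨b, hb⟩ (1 : ℂ) j j = 0
    apply Matrix.single_apply_of_ne
    rintro ⟨rfl, h2⟩
    have : (⟨a, ha⟩ : Fin n).val = (⟨b, hb⟩ : Fin n).val := by rw [h2]
    simp at this
    omega
  · intro p q hpq hnle
    apply Matrix.single_apply_of_ne
    rintro ⟨rfl, rfl⟩
    exact hnle ((hle _ _).2 (Or.inr ⟨hab, hrel⟩))

lemma diag_mem (hle : ∀ p q : Fin n, le p q ↔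
      p = q ∨ (p.val < q.val ∧ (q.val ≤ n - 2 ∨ p.val < n / 2)))
    (d : ℕ → ℂ) (hd : ∑ j ∈ Finset.range n, d j = 0) :
    Matrix.diagonal (fun j : Fin n => d j.val) ∈ gA le := by
  constructor
  · rw [Matrix.trace_diagonal]
    rw [← Fin.sum_univ_eq_sum_range (fun j => d j) n] at hd
    exact hd
  · intro p q hpq _
    exact Matrix.diagonal_apply_ne _ hpq

lemma Gs_bracket_E (hn : 4 ≤ n) (x : M n) {a b : ℕ} (ha : a < n) (hb : b < n) :
    Gs n ⁅x, Matrix.single (⟨a, ha⟩ : Fin n) ⟨b, hb⟩ (1 : ℂ)⁆ =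
      ((if n / 2 ≤ b ∧ b ≤ n - 2 then Xe x (n - 2 - b) a else 0)
        + (if b = n - 1 then ∑ i ∈ Finset.range (n / 2), Xe x i a else 0))
      - ((if a < (n - 1) / 2 then Xe x b (n - 2 - a) else 0)
        + (if a < n / 2 then Xe x b (n - 1) else 0)) := by
  have key1 : ∀ i ∈ Finset.range ((n - 1) / 2),
      Xe ⁅x, Matrix.single (⟨a, ha⟩ : Fin n) ⟨b, hb⟩ (1 : ℂ)⁆ i (n - 2 - i)
      = ((if n - 2 - i = b then Xe x i a else 0) - (if i = a then Xe x b (n - 2 - i) else 0)) := by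
    intro i hi
    simp only [Finset.mem_range] at hi
    rw [Xe_eq _ (by omega) (by omega), Ring.lie_def, Matrix.sub_apply,
      mul_E_apply, E_mul_apply]
    congr 1
    · by_cases h : n - 2 - i = b
      · rw [if_pos h, if_pos (by simp [Fin.ext_iff, h]), Xe_eq x (by omega) (by omega)]
      · rw [if_neg h, if_neg (by simp [Fin.ext_iff]; omega)]
    · by_cases h : i = a
      · rw [if_pos h, if_pos (by simp [Fin.ext_iff, h]), Xe_eq x (by omega) (by omega)]
      · rw [if_neg h, if_neg (by simp [Fin.ext_iff]; omega)]
  have key2 : ∀ i ∈ Finset.range (n / 2),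
      Xe ⁅x, Matrix.single (⟨a, ha⟩ : Fin n) ⟨b, hb⟩ (1 : ℂ)⁆ i (n - 1)
      = ((if n - 1 = b then Xe x i a else 0) - (if i = a then Xe x b (n - 1) else 0)) := by
    intro i hi
    simp only [Finset.mem_range] at hi
    rw [Xe_eq _ (by omega) (by omega), Ring.lie_def, Matrix.sub_apply,
      mul_E_apply, E_mul_apply]
    congr 1
    · by_cases h : n - 1 = b
      · rw [if_pos h, if_pos (by simp [Fin.ext_iff, h]), Xe_eq x (by omega) (by omega)]
      · rw [if_neg h, if_neg (by simp [Fin.ext_iff]; omega)]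
    · by_cases h : i = a
      · rw [if_pos h, if_pos (by simp [Fin.ext_iff, h]), Xe_eq x (by omega) (by omega)]
      · rw [if_neg h, if_neg (by simp [Fin.ext_iff]; omega)]
  unfold Gs
  rw [Finset.sum_congr rfl key1, Finset.sum_congr rfl key2,
    Finset.sum_sub_distrib, Finset.sum_sub_distrib]
  have c1 : (∑ i ∈ Finset.range ((n - 1) / 2), if n - 2 - i = b then Xe x i a else 0)
      = if n / 2 ≤ b ∧ b ≤ n - 2 then Xe x (n - 2 - b) a else 0 := by
    by_cases hc : n / 2 ≤ b ∧ b ≤ n - 2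
    · rw [if_pos hc, Finset.sum_eq_single_of_mem (n - 2 - b)
        (Finset.mem_range.2 (by omega))]
      · rw [if_pos (by omega)]
      · intro i hi hne
        rw [if_neg (by simp only [Finset.mem_range] at hi; omega)]
    · rw [if_neg hc]
      apply Finset.sum_eq_zero
      intro i hi
      simp only [Finset.mem_range] at hi
      rw [if_neg (by omega)]
  have c2 : (∑ i ∈ Finset.range ((n - 1) / 2), if i = a then Xe x b (n - 2 - i) else 0)
      = if a < (n - 1) / 2 then Xe x b (n - 2 - a) else 0 := by
    rw [Finset.sum_ite_eq' (Finset.range ((n - 1) / 2)) a (fun i => Xe x b (n - 2 - i))]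
    by_cases h : a < (n - 1) / 2
    · rw [if_pos (Finset.mem_range.2 h), if_pos h]
    · rw [if_neg (by simp [Finset.mem_range]; omega), if_neg h]
  have c3 : (∑ i ∈ Finset.range (n / 2), if n - 1 = b then Xe x i a else 0)
      = if b = n - 1 then ∑ i ∈ Finset.range (n / 2), Xe x i a else 0 := by
    by_cases h : b = n - 1
    · rw [if_pos h]; apply Finset.sum_congr rfl; intro i _; rw [if_pos h.symm]
    · rw [if_neg h]; apply Finset.sum_eq_zero; intro i _
      rw [if_neg (fun hc => h hc.symm)]
  have c4 : (∑ i ∈ Finset.range (n / 2), if i = a then Xe x b (n - 1) else 0)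
      = if a < n / 2 then Xe x b (n - 1) else 0 := by
    rw [Finset.sum_ite_eq' (Finset.range (n / 2)) a (fun _ => Xe x b (n - 1))]
    by_cases h : a < n / 2
    · rw [if_pos (Finset.mem_range.2 h), if_pos h]
    · rw [if_neg (by simp [Finset.mem_range]; omega), if_neg h]
  rw [c1, c2, c3, c4]
  ring

lemma Gs_bracket_diag (hn : 4 ≤ n) (x : M n) (d : ℕ → ℂ) :
    Gs n ⁅x, Matrix.diagonal (fun j : Fin n => d j.val)⁆ =
      (∑ i ∈ Finset.range ((n - 1) / 2), Xe x i (n - 2 - i) * (d (n - 2 - i) - d i))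
      + ∑ i ∈ Finset.range (n / 2), Xe x i (n - 1) * (d (n - 1) - d i) := by
  unfold Gs
  congr 1
  · apply Finset.sum_congr rfl
    intro i hi
    simp only [Finset.mem_range] at hi
    rw [Xe_eq _ (show i < n by omega) (show n - 2 - i < n by omega),
      Xe_eq _ (show i < n by omega) (show n - 2 - i < n by omega),
      Ring.lie_def, Matrix.sub_apply, Matrix.mul_diagonal, Matrix.diagonal_mul]
    ring
  · apply Finset.sum_congr rfl
    intro i hi
    simp only [Finset.mem_range] at hi
    rw [Xe_eq _ (show i < n by omega) (show n - 1 < n by omega),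
      Xe_eq _ (show i < n by omega) (show n - 1 < n by omega),
      Ring.lie_def, Matrix.sub_apply, Matrix.mul_diagonal, Matrix.diagonal_mul]
    ring

end SolutionAux


section SolutionFrob

open Finset

variable {n : ℕ} {le : Fin n → Fin n → Prop}

lemma frob_aux (hn : 4 ≤ n) (h0 : 0 < n)
    (hle : ∀ p q : Fin n, le p q ↔
      p = q ∨ (p.val < q.val ∧ (q.val ≤ n - 2 ∨ p.val < n / 2)))
    (S : Finset (Fin n × Fin n))
    (hS : S =
      ((Finset.Icc 1 ((n - 1) / 2)).image fun i =>
        (fmk n h0 (i - 1), fmk n h0 (n - i - 1))) ∪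
      ((Finset.Icc 1 (n / 2)).image fun i =>
        (fmk n h0 (i - 1), fmk n h0 (n - 1)))) :
    IsFrobeniusOn (gA le) (FS S) := by
  intro x hxg hx
  obtain ⟨hT, hZ0⟩ := hxg
  have hz : ∀ a b : ℕ, a < n → b < n → a ≠ b →
      ¬(a < b ∧ (b ≤ n - 2 ∨ a < n / 2)) → Xe x a b = 0 := by
    intro a b ha hb hab hrel
    rw [Xe_eq x ha hb]
    refine hZ0 _ _ (by simp [Fin.ext_iff]; omega) ?_
    rw [hle]
    simp only [Fin.ext_iff]
    omega
  have hz1 : ∀ a b : ℕ, b < a → a < n → Xe x a b = 0 := by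
    intro a b hba ha
    exact hz a b ha (by omega) (by omega) (by omega)
  have hz2 : ∀ v : ℕ, n / 2 ≤ v → v ≤ n - 2 → Xe x v (n - 1) = 0 := by
    intro v h1 h2
    exact hz v (n - 1) (by omega) (by omega) (by omega) (by omega)
  have EQ : ∀ a b : ℕ, a < b → b < n → (b ≤ n - 2 ∨ a < n / 2) →
      (if n / 2 ≤ b ∧ b ≤ n - 2 then Xe x (n - 2 - b) a else 0)
        + (if b = n - 1 then ∑ i ∈ Finset.range (n / 2), Xe x i a else 0)
      = (if a < (n - 1) / 2 then Xe x b (n - 2 - a) else 0)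
        + (if a < n / 2 then Xe x b (n - 1) else 0) := by
    intro a b hab hbn hrel
    have h := hx _ (E_mem hle (by omega) hbn hab hrel)
    rw [FS_eq hn h0 S hS, Gs_bracket_E hn] at h
    exact sub_eq_zero.1 h
  have hS2a : ∀ u v : ℕ, u < (n - 1) / 2 → n / 2 ≤ v → v ≤ n - 2 →
      Xe x (n - 2 - v) u = Xe x v (n - 2 - u) := by
    intro u v hu hv1 hv2
    have h := EQ u v (by omega) (by omega) (Or.inl hv2)
    rw [if_pos ⟨hv1, hv2⟩, if_neg (by omega), if_pos hu, if_pos (by omega),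
      hz2 v hv1 hv2, add_zero, add_zero] at h
    exact h
  have hS2b : ∀ u v : ℕ, (n - 1) / 2 ≤ u → u < n / 2 → n / 2 ≤ v → v ≤ n - 2 →
      Xe x (n - 2 - v) u = 0 := by
    intro u v h1 h2 hv1 hv2
    have h := EQ u v (by omega) (by omega) (Or.inl hv2)
    rw [if_pos ⟨hv1, hv2⟩, if_neg (by omega), if_neg (by omega), if_pos h2,
      hz2 v hv1 hv2, add_zero, add_zero] at h
    simpa using h
  have hS1 : ∀ a u : ℕ, n / 2 ≤ u → a + u ≤ n - 3 → Xe x a u = 0 := by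
    intro a u hu hau
    have h := EQ u (n - 2 - a) (by omega) (by omega) (Or.inl (by omega))
    rw [if_pos (by omega), if_neg (by omega), if_neg (by omega), if_neg (by omega)] at h
    rw [show n - 2 - (n - 2 - a) = a from by omega] at h
    simpa using h
  have hZLow : ∀ a b : ℕ, a < b → a + b ≤ n - 3 → Xe x a b = 0 := by
    intro a b hab h3
    by_cases hb : n / 2 ≤ b
    · exact hS1 a b hb h3
    · by_cases hbA : b < (n - 1) / 2
      · have h := hS2a b (n - 2 - a) hbA (by omega) (by omega)
        rw [show n - 2 - (n - 2 - a) = a from by omega] at h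
        rw [h]
        exact hz1 _ _ (by omega) (by omega)
      · have h := hS2b b (n - 2 - a) (by omega) (by omega) (by omega) (by omega)
        rw [show n - 2 - (n - 2 - a) = a from by omega] at h
        exact h
  have hS3b : ∀ p q : ℕ, n / 2 ≤ p → p < q → q ≤ n - 2 → Xe x p q = 0 := by
    intro p q h1 h2 h3
    have h := hS2a (n - 2 - q) p (by omega) h1 (by omega)
    rw [show n - 2 - (n - 2 - q) = q from by omega] at h
    rw [← h]
    exact hz1 _ _ (by omega) (by omega)
  have hS3c : ∀ u : ℕ, u < (n - 1) / 2 → Xe x u u = Xe x (n - 2 - u) (n - 2 - u) := by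
    intro u hu
    have h := hS2a u (n - 2 - u) hu (by omega) (by omega)
    rw [show n - 2 - (n - 2 - u) = u from by omega] at h
    exact h
  have hS4 : ∀ u v : ℕ, u < v → v < n / 2 → Xe x v (n - 2 - u) = -Xe x v (n - 1) := by
    intro u v huv hv
    have h := EQ u v huv (by omega) (Or.inr (by omega))
    rw [if_neg (by omega), if_neg (by omega), if_pos (by omega), if_pos (by omega)] at h
    linear_combination -h
  have hS5 : ∀ u : ℕ, u < n / 2 →
      (∑ i ∈ Finset.range (n / 2), Xe x i u) = Xe x (n - 1) (n - 1) := by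
    intro u hu
    have h := EQ u (n - 1) (by omega) (by omega) (Or.inr hu)
    rw [if_neg (by omega), if_pos rfl, if_pos hu] at h
    by_cases hA : u < (n - 1) / 2
    · rw [if_pos hA, hz1 (n - 1) (n - 2 - u) (by omega) (by omega)] at h
      simpa using h
    · rw [if_neg hA] at h
      simpa using h
  have DEQ : ∀ r : ℕ, r < n →
      (∑ i ∈ Finset.range ((n - 1) / 2), Xe x i (n - 2 - i) *
        (((if n - 2 - i = r then (1 : ℂ) else 0) - (if n - 2 - i = n - 1 then 1 else 0))
          - ((if i = r then (1 : ℂ) else 0) - (if i = n - 1 then 1 else 0))))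
      + (∑ i ∈ Finset.range (n / 2), Xe x i (n - 1) *
        (((if n - 1 = r then (1 : ℂ) else 0) - (if n - 1 = n - 1 then 1 else 0))
          - ((if i = r then (1 : ℂ) else 0) - (if i = n - 1 then 1 else 0)))) = 0 := by
    intro r hr
    have hdsum : ∑ j ∈ Finset.range n,
        ((if j = r then (1 : ℂ) else 0) - (if j = n - 1 then 1 else 0)) = 0 := by
      rw [Finset.sum_sub_distrib,
        Finset.sum_ite_eq' (Finset.range n) r (fun _ => (1 : ℂ)),
        Finset.sum_ite_eq' (Finset.range n) (n - 1) (fun _ => (1 : ℂ)),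
        if_pos (Finset.mem_range.2 hr), if_pos (Finset.mem_range.2 (by omega))]
      ring
    have h := hx _ (diag_mem hle
      (fun j => (if j = r then (1 : ℂ) else 0) - (if j = n - 1 then 1 else 0)) hdsum)
    rw [FS_eq hn h0 S hS] at h
    have h2 := Gs_bracket_diag hn x
      (fun j => (if j = r then (1 : ℂ) else 0) - (if j = n - 1 then 1 else 0))
    exact h2.symm.trans h
  have hS6a : ∀ r : ℕ, n / 2 ≤ r → r ≤ n - 2 →
      Xe x (n - 2 - r) r = ∑ i ∈ Finset.range (n / 2), Xe x i (n - 1) := by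
    intro r h1 h2
    have h := DEQ r (by omega)
    have e1 : ∀ i ∈ Finset.range ((n - 1) / 2), Xe x i (n - 2 - i) *
        (((if n - 2 - i = r then (1 : ℂ) else 0) - (if n - 2 - i = n - 1 then 1 else 0))
          - ((if i = r then (1 : ℂ) else 0) - (if i = n - 1 then 1 else 0)))
        = (if i = n - 2 - r then Xe x (n - 2 - r) r else 0) := by
      intro i hi
      simp only [Finset.mem_range] at hi
      by_cases hir : i = n - 2 - r
      · subst hir
        rw [if_pos (by omega), if_neg (by omega), if_neg (by omega), if_neg (by omega),
          if_pos rfl, show n - 2 - (n - 2 - r) = r from by omega]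
        ring
      · rw [if_neg (by omega), if_neg (by omega), if_neg (by omega), if_neg (by omega),
          if_neg hir]
        ring
    have e2 : ∀ i ∈ Finset.range (n / 2), Xe x i (n - 1) *
        (((if n - 1 = r then (1 : ℂ) else 0) - (if n - 1 = n - 1 then 1 else 0))
          - ((if i = r then (1 : ℂ) else 0) - (if i = n - 1 then 1 else 0)))
        = -Xe x i (n - 1) := by
      intro i hi
      simp only [Finset.mem_range] at hi
      rw [if_neg (by omega), if_pos rfl, if_neg (by omega), if_neg (by omega)]
      ring
    rw [Finset.sum_congr rfl e1, Finset.sum_congr rfl e2,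
      Finset.sum_ite_eq' _ (n - 2 - r) _, if_pos (Finset.mem_range.2 (by omega)),
      Finset.sum_neg_distrib] at h
    linear_combination h
  have hS6b : ∀ r : ℕ, r < n / 2 →
      (if r < (n - 1) / 2 then Xe x r (n - 2 - r) else 0)
        + (∑ i ∈ Finset.range (n / 2), Xe x i (n - 1)) + Xe x r (n - 1) = 0 := by
    intro r hr
    have h := DEQ r (by omega)
    have e1 : ∀ i ∈ Finset.range ((n - 1) / 2), Xe x i (n - 2 - i) *
        (((if n - 2 - i = r then (1 : ℂ) else 0) - (if n - 2 - i = n - 1 then 1 else 0))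
          - ((if i = r then (1 : ℂ) else 0) - (if i = n - 1 then 1 else 0)))
        = -(if i = r then Xe x i (n - 2 - i) else 0) := by
      intro i hi
      simp only [Finset.mem_range] at hi
      by_cases hir : i = r
      · rw [if_neg (by omega), if_neg (by omega), if_pos hir, if_neg (by omega), if_pos hir]
        ring
      · rw [if_neg (by omega), if_neg (by omega), if_neg hir, if_neg (by omega), if_neg hir]
        ring
    have e2 : ∀ i ∈ Finset.range (n / 2), Xe x i (n - 1) *
        (((if n - 1 = r then (1 : ℂ) else 0) - (if n - 1 = n - 1 then 1 else 0))
          - ((if i = r then (1 : ℂ) else 0) - (if i = n - 1 then 1 else 0)))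
        = -Xe x i (n - 1) + -(if i = r then Xe x i (n - 1) else 0) := by
      intro i hi
      simp only [Finset.mem_range] at hi
      by_cases hir : i = r
      · rw [if_neg (by omega), if_pos rfl, if_pos hir, if_neg (by omega), if_pos hir]
        ring
      · rw [if_neg (by omega), if_pos rfl, if_neg hir, if_neg (by omega), if_neg hir]
        ring
    rw [Finset.sum_congr rfl e1, Finset.sum_congr rfl e2, Finset.sum_neg_distrib,
      Finset.sum_add_distrib, Finset.sum_neg_distrib, Finset.sum_neg_distrib,
      Finset.sum_ite_eq' _ r (fun i => Xe x i (n - 2 - i)),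
      Finset.sum_ite_eq' _ r (fun i => Xe x i (n - 1)),
      if_pos (Finset.mem_range.2 hr)] at h
    by_cases hrA : r < (n - 1) / 2
    · rw [if_pos (Finset.mem_range.2 hrA)] at h
      rw [if_pos hrA]
      linear_combination -h
    · rw [if_neg (by simp only [Finset.mem_range]; omega)] at h
      rw [if_neg hrA]
      linear_combination -h
  have hTA : ∀ r : ℕ, r < (n - 1) / 2 →
      Xe x r (n - 2 - r) = ∑ i ∈ Finset.range (n / 2), Xe x i (n - 1) := by
    intro r hr
    have h := hS6a (n - 2 - r) (by omega) (by omega)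
    rw [show n - 2 - (n - 2 - r) = r from by omega] at h
    exact h
  have ht1 : ∀ r : ℕ, r < (n - 1) / 2 →
      Xe x r (n - 1) = -(2 * ∑ i ∈ Finset.range (n / 2), Xe x i (n - 1)) := by
    intro r hr
    have h := hS6b r (by omega)
    rw [if_pos hr, hTA r hr] at h
    linear_combination h
  have ht2 : ∀ r : ℕ, (n - 1) / 2 ≤ r → r < n / 2 →
      Xe x r (n - 1) = -∑ i ∈ Finset.range (n / 2), Xe x i (n - 1) := by
    intro r h1 h2
    have h := hS6b r h2
    rw [if_neg (by omega)] at h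
    linear_combination h
  have hTs : (∑ i ∈ Finset.range (n / 2), Xe x i (n - 1)) = 0 := by
    have hsplit : (∑ i ∈ Finset.range (n / 2), Xe x i (n - 1))
        = (∑ i ∈ Finset.Ico 0 ((n - 1) / 2), Xe x i (n - 1))
          + ∑ i ∈ Finset.Ico ((n - 1) / 2) (n / 2), Xe x i (n - 1) := by
      rw [Finset.range_eq_Ico]
      exact (Finset.sum_Ico_consecutive _ (Nat.zero_le _) (by omega)).symm
    have ha1 : ∀ i ∈ Finset.Ico 0 ((n - 1) / 2), Xe x i (n - 1)
        = -(2 * ∑ i ∈ Finset.range (n / 2), Xe x i (n - 1)) := by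
      intro i hi
      rw [Finset.mem_Ico] at hi
      exact ht1 i hi.2
    have ha2 : ∀ i ∈ Finset.Ico ((n - 1) / 2) (n / 2), Xe x i (n - 1)
        = -∑ i ∈ Finset.range (n / 2), Xe x i (n - 1) := by
      intro i hi
      rw [Finset.mem_Ico] at hi
      exact ht2 i hi.1 hi.2
    rw [Finset.sum_congr rfl ha1, Finset.sum_congr rfl ha2,
      Finset.sum_const, Finset.sum_const, Nat.card_Ico, Nat.card_Ico,
      nsmul_eq_mul, nsmul_eq_mul] at hsplit
    have hnat : ((n - 1) / 2 - 0) + (((n - 1) / 2 - 0) + (n / 2 - (n - 1) / 2) + 1) = n := by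
      omega
    have hc1 : (((n - 1) / 2 - 0 : ℕ) : ℂ) + ((((n - 1) / 2 - 0 : ℕ) : ℂ)
        + ((n / 2 - (n - 1) / 2 : ℕ) : ℂ) + 1) = (n : ℂ) := by exact_mod_cast hnat
    have hn0 : (n : ℂ) ≠ 0 := Nat.cast_ne_zero.2 (by omega)
    have hkey : (n : ℂ) * ∑ i ∈ Finset.range (n / 2), Xe x i (n - 1) = 0 := by
      linear_combination hsplit - (∑ i ∈ Finset.range (n / 2), Xe x i (n - 1)) * hc1
    exact (mul_eq_zero.1 hkey).resolve_left hn0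
  have ht0 : ∀ r : ℕ, r < n / 2 → Xe x r (n - 1) = 0 := by
    intro r hr
    by_cases hA : r < (n - 1) / 2
    · rw [ht1 r hA, hTs]; ring
    · rw [ht2 r (by omega) hr, hTs]; ring
  have hanti : ∀ r : ℕ, r < (n - 1) / 2 → Xe x r (n - 2 - r) = 0 := by
    intro r hr
    rw [hTA r hr, hTs]
  have hoff : ∀ a b : ℕ, a < n → b < n → a ≠ b → Xe x a b = 0 := by
    intro a b ha hb hab
    rcases lt_or_gt_of_ne hab with h | h
    · by_cases hb1 : b = n - 1
      · subst hb1
        by_cases ha1 : a < n / 2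
        · exact ht0 a ha1
        · exact hz a (n - 1) ha hb (by omega) (by omega)
      · have hb2 : b ≤ n - 2 := by omega
        rcases lt_trichotomy (a + b) (n - 2) with h3 | h3 | h3
        · exact hZLow a b h (by omega)
        · rw [show b = n - 2 - a from by omega]
          exact hanti a (by omega)
        · by_cases ha2 : n / 2 ≤ a
          · exact hS3b a b ha2 h hb2
          · have h4 := hS4 (n - 2 - b) a (by omega) (by omega)
            rw [show n - 2 - (n - 2 - b) = b from by omega] at h4
            rw [h4, ht0 a (by omega), neg_zero]
    · exact hz1 a b h ha
  have hdga : ∀ u : ℕ, u < n / 2 → Xe x u u = Xe x (n - 1) (n - 1) := by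
    intro u hu
    have h := hS5 u hu
    rw [Finset.sum_eq_single_of_mem u (Finset.mem_range.2 hu)
      (fun i hi hne => hoff i u (by simp only [Finset.mem_range] at hi; omega)
        (by omega) hne)] at h
    exact h
  have hdg : ∀ j : ℕ, j < n → Xe x j j = Xe x (n - 1) (n - 1) := by
    intro j hj
    by_cases h1 : j < n / 2
    · exact hdga j h1
    · by_cases h2 : j = n - 1
      · rw [h2]
      · have h3 := hS3c (n - 2 - j) (by omega)
        rw [show n - 2 - (n - 2 - j) = j from by omega] at h3
        rw [← h3]
        exact hdga (n - 2 - j) (by omega)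
  have hc0 : Xe x (n - 1) (n - 1) = 0 := by
    have htr : ∑ j ∈ Finset.range n, Xe x j j = 0 := by
      have e : Matrix.trace x = ∑ j ∈ Finset.range n, Xe x j j := by
        rw [Matrix.trace, ← Fin.sum_univ_eq_sum_range (fun j => Xe x j j) n]
        apply Finset.sum_congr rfl
        intro i _
        rw [Xe_eq x i.isLt i.isLt]
        simp [Matrix.diag]
      rw [← e, hT]
    rw [Finset.sum_congr rfl (fun j hj => hdg j (Finset.mem_range.1 hj)),
      Finset.sum_const, Finset.card_range, nsmul_eq_mul] at htr
    have hn0 : (n : ℂ) ≠ 0 := Nat.cast_ne_zero.2 (by omega)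
    exact (mul_eq_zero.1 htr).resolve_left hn0
  ext p q
  have key : Xe x p.val q.val = 0 := by
    by_cases hpq : p.val = q.val
    · rw [show (p.val : ℕ) = q.val from hpq, hdg q.val q.isLt, hc0]
    · exact hoff p.val q.val p.isLt q.isLt hpq
  rw [Xe_eq x p.isLt q.isLt] at key
  simpa using key

end SolutionFrob


section SolutionSpec

open Finset

variable {n : ℕ} {le : Fin n → Fin n → Prop}

/-- The candidate principal element is diagonal with entries `(n-⌊n/2⌋)/n` then `-⌊n/2⌋/n`. -/
def dfun (n : ℕ) : ℕ → ℂ := fun j =>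
  if j < n / 2 then ((n : ℂ) - ((n / 2 : ℕ) : ℂ)) / n else -((n / 2 : ℕ) : ℂ) / n

def H0 (n : ℕ) : M n := Matrix.diagonal (fun j : Fin n => dfun n j.val)

lemma dfun_sum (hn : 4 ≤ n) : ∑ j ∈ Finset.range n, dfun n j = 0 := by
  have hsplit : ∑ j ∈ Finset.range n, dfun n j
      = (∑ j ∈ Finset.Ico 0 (n / 2), dfun n j) + ∑ j ∈ Finset.Ico (n / 2) n, dfun n j := by
    rw [Finset.range_eq_Ico]
    exact (Finset.sum_Ico_consecutive _ (Nat.zero_le _) (by omega)).symm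
  have e1 : ∀ j ∈ Finset.Ico 0 (n / 2), dfun n j = ((n : ℂ) - ((n / 2 : ℕ) : ℂ)) / n := by
    intro j hj
    rw [Finset.mem_Ico] at hj
    exact if_pos hj.2
  have e2 : ∀ j ∈ Finset.Ico (n / 2) n, dfun n j = -((n / 2 : ℕ) : ℂ) / n := by
    intro j hj
    rw [Finset.mem_Ico] at hj
    exact if_neg (by omega)
  rw [hsplit, Finset.sum_congr rfl e1, Finset.sum_congr rfl e2,
    Finset.sum_const, Finset.sum_const, Nat.card_Ico, Nat.card_Ico,
    nsmul_eq_mul, nsmul_eq_mul]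
  have hn0 : (n : ℂ) ≠ 0 := Nat.cast_ne_zero.2 (by omega)
  have hc1 : ((n / 2 - 0 : ℕ) : ℂ) = ((n / 2 : ℕ) : ℂ) := by norm_num
  have hc2 : ((n - n / 2 : ℕ) : ℂ) = (n : ℂ) - ((n / 2 : ℕ) : ℂ) :=
    Nat.cast_sub (by omega)
  rw [hc1, hc2]
  field_simp
  ring

lemma H0_mem (hn : 4 ≤ n)
    (hle : ∀ p q : Fin n, le p q ↔
      p = q ∨ (p.val < q.val ∧ (q.val ≤ n - 2 ∨ p.val < n / 2))) :
    H0 n ∈ gA le :=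
  diag_mem hle (dfun n) (dfun_sum hn)

lemma dfun_diff (hn : 4 ≤ n) {i j : ℕ} (hi : i < n / 2) (hj : ¬ j < n / 2) :
    dfun n i - dfun n j = 1 := by
  unfold dfun
  rw [if_pos hi, if_neg hj]
  have hn0 : (n : ℂ) ≠ 0 := Nat.cast_ne_zero.2 (by omega)
  field_simp
  ring

lemma dfun_diff' (hn : 4 ≤ n) {i j : ℕ} (hi : ¬ i < n / 2) (hj : j < n / 2) :
    dfun n i - dfun n j = -1 := by
  have := dfun_diff hn hj hi
  linear_combination -this

lemma dfun_same {i j : ℕ} (h : i < n / 2 ↔ j < n / 2) :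
    dfun n i - dfun n j = 0 := by
  unfold dfun
  by_cases hi : i < n / 2
  · rw [if_pos hi, if_pos (h.1 hi), sub_self]
  · rw [if_neg hi, if_neg (fun hj => hi (h.2 hj)), sub_self]

lemma H0_principal (hn : 4 ≤ n) (h0 : 0 < n) (S : Finset (Fin n × Fin n))
    (hS : S =
      ((Finset.Icc 1 ((n - 1) / 2)).image fun i =>
        (fmk n h0 (i - 1), fmk n h0 (n - i - 1))) ∪
      ((Finset.Icc 1 (n / 2)).image fun i =>
        (fmk n h0 (i - 1), fmk n h0 (n - 1)))) (y : M n) :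
    FS S ⁅H0 n, y⁆ = FS S y := by
  have hgen : ∀ c1 c2 Y : ℂ, c1 - c2 = 1 → c1 * Y - Y * c2 = Y := by
    intro c1 c2 Y h
    linear_combination Y * h
  rw [FS_eq hn h0 S hS, FS_eq hn h0 S hS]
  unfold Gs
  congr 1
  · apply Finset.sum_congr rfl
    intro i hi
    rw [Finset.mem_range] at hi
    rw [Xe_eq _ (show i < n by omega) (show n - 2 - i < n by omega),
      Xe_eq _ (show i < n by omega) (show n - 2 - i < n by omega),
      Ring.lie_def, Matrix.sub_apply]
    unfold H0
    rw [Matrix.diagonal_mul, Matrix.mul_diagonal]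
    exact hgen _ _ _ (dfun_diff hn (show i < n / 2 by omega)
      (show ¬ n - 2 - i < n / 2 by omega))
  · apply Finset.sum_congr rfl
    intro i hi
    rw [Finset.mem_range] at hi
    rw [Xe_eq _ (show i < n by omega) (show n - 1 < n by omega),
      Xe_eq _ (show i < n by omega) (show n - 1 < n by omega),
      Ring.lie_def, Matrix.sub_apply]
    unfold H0
    rw [Matrix.diagonal_mul, Matrix.mul_diagonal]
    exact hgen _ _ _ (dfun_diff hn (show i < n / 2 by omega)
      (show ¬ n - 1 < n / 2 by omega))

lemma principal_unique (hn : 4 ≤ n) (h0 : 0 < n)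
    (hle : ∀ p q : Fin n, le p q ↔
      p = q ∨ (p.val < q.val ∧ (q.val ≤ n - 2 ∨ p.val < n / 2)))
    (S : Finset (Fin n × Fin n))
    (hS : S =
      ((Finset.Icc 1 ((n - 1) / 2)).image fun i =>
        (fmk n h0 (i - 1), fmk n h0 (n - i - 1))) ∪
      ((Finset.Icc 1 (n / 2)).image fun i =>
        (fmk n h0 (i - 1), fmk n h0 (n - 1)))) :
    ∀ H : M n, IsPrincipal (gA le) (FS S) H → H = H0 n := by
  rintro H ⟨hHg, hHp⟩
  have hmem : H - H0 n ∈ gA le := Submodule.sub_mem _ hHg (H0_mem hn hle)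
  have hzero : ∀ y ∈ gA le, FS S ⁅H - H0 n, y⁆ = 0 := by
    intro y hy
    have e : ⁅H - H0 n, y⁆ = ⁅H, y⁆ - ⁅H0 n, y⁆ := by
      simp only [Ring.lie_def, sub_mul, mul_sub]; abel
    rw [e, map_sub, hHp y hy, H0_principal hn h0 S hS y, sub_self]
  have hfin := frob_aux hn h0 hle S hS (H - H0 n) hmem hzero
  rwa [sub_eq_zero] at hfin

end SolutionSpec


section SolutionEig

open Finset

variable {n : ℕ} {le : Fin n → Fin n → Prop}

/-- Matrices supported on a finite set of positions. -/
def supM (T : Finset (Fin n × Fin n)) : Submodule ℂ (M n) where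
  carrier := {A | ∀ p q : Fin n, (p, q) ∉ T → A p q = 0}
  add_mem' := by
    intro A B hA hB p q h
    simp [Matrix.add_apply, hA p q h, hB p q h]
  zero_mem' := by intro p q _; rfl
  smul_mem' := by
    intro c A hA p q h
    simp [Matrix.smul_apply, hA p q h]

def supMfun (T : Finset (Fin n × Fin n)) : ↥(supM T) →ₗ[ℂ] (↥T → ℂ) where
  toFun A := fun t => A.1 t.1.1 t.1.2
  map_add' A B := rfl
  map_smul' c A := rfl

def funSupM (T : Finset (Fin n × Fin n)) : (↥T → ℂ) →ₗ[ℂ] ↥(supM T) where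
  toFun f := ⟨Matrix.of fun p q => if h : (p, q) ∈ T then f ⟨(p, q), h⟩ else 0,
    fun p q hpq => dif_neg hpq⟩
  map_add' f g := by
    apply Subtype.ext
    ext p q
    by_cases h : (p, q) ∈ T
    · simp [Matrix.of_apply, dif_pos h]
    · simp [Matrix.of_apply, dif_neg h]
  map_smul' c f := by
    apply Subtype.ext
    ext p q
    by_cases h : (p, q) ∈ T
    · simp [Matrix.of_apply, dif_pos h]
    · simp [Matrix.of_apply, dif_neg h]

def supMequiv (T : Finset (Fin n × Fin n)) : ↥(supM T) ≃ₗ[ℂ] (↥T → ℂ) :=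
  LinearEquiv.ofLinear (supMfun T) (funSupM T)
    (by
      apply LinearMap.ext
      intro f
      funext t
      obtain ⟨⟨p, q⟩, ht⟩ := t
      exact dif_pos ht)
    (by
      apply LinearMap.ext
      intro A
      apply Subtype.ext
      ext p q
      by_cases h : (p, q) ∈ T
      · exact dif_pos h
      · exact (dif_neg h).trans (A.2 p q h).symm)

lemma finrank_supM (T : Finset (Fin n × Fin n)) :
    Module.finrank ℂ ↥(supM T) = T.card := by
  rw [(supMequiv T).finrank_eq, Module.finrank_pi, Fintype.card_coe]

lemma adE_apply (H A : M n) : adE H A = H * A - A * H := rfl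

lemma mem_eig_H0 (μ : ℂ) (A : M n) :
    A ∈ Module.End.eigenspace (adE (H0 n)) μ ↔
      ∀ p q : Fin n, (dfun n p.val - dfun n q.val) * A p q = μ * A p q := by
  rw [Module.End.mem_eigenspace_iff]
  constructor
  · intro h p q
    have h' : (H0 n * A - A * H0 n) p q = (μ • A) p q := by
      rw [← adE_apply, h]
    rw [Matrix.sub_apply, Matrix.smul_apply, smul_eq_mul] at h'
    unfold H0 at h'
    rw [Matrix.diagonal_mul, Matrix.mul_diagonal] at h'
    linear_combination h'
  · intro h
    rw [adE_apply]
    ext p q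
    rw [Matrix.sub_apply, Matrix.smul_apply, smul_eq_mul]
    unfold H0
    rw [Matrix.diagonal_mul, Matrix.mul_diagonal]
    linear_combination h p q

/-- Positions of the eigenvalue-1 eigenspace inside `g_A`. -/
def TS1 (n : ℕ) : Finset (Fin n × Fin n) :=
  Finset.univ.filter fun pq => pq.1.val < n / 2 ∧ n / 2 ≤ pq.2.val

/-- Positions of the eigenvalue-0 eigenspace inside `g_A`. -/
def TS0 (n : ℕ) : Finset (Fin n × Fin n) :=
  Finset.univ.filter fun pq => pq.1 = pq.2
    ∨ (pq.1.val < pq.2.val ∧ pq.2.val < n / 2)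
    ∨ (n / 2 ≤ pq.1.val ∧ pq.1.val < pq.2.val ∧ pq.2.val ≤ n - 2)

lemma W1_eq (hn : 4 ≤ n)
    (hle : ∀ p q : Fin n, le p q ↔
      p = q ∨ (p.val < q.val ∧ (q.val ≤ n - 2 ∨ p.val < n / 2))) :
    gA le ⊓ Module.End.eigenspace (adE (H0 n)) 1 = supM (TS1 n) := by
  apply le_antisymm
  · intro A hA
    rw [Submodule.mem_inf] at hA
    obtain ⟨hg, he⟩ := hA
    rw [mem_eig_H0] at he
    intro p q hpq
    have h := he p q
    rw [one_mul] at h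
    by_cases h1 : p.val < n / 2
    · by_cases h2 : q.val < n / 2
      · rw [dfun_same (iff_of_true h1 h2)] at h
        simpa using h.symm
      · exact absurd (by
          simp only [TS1, Finset.mem_filter, Finset.mem_univ, true_and]
          omega) hpq
    · by_cases h2 : q.val < n / 2
      · rw [dfun_diff' hn h1 h2] at h
        have h2' : (2 : ℂ) * A p q = 0 := by linear_combination -h
        exact (mul_eq_zero.1 h2').resolve_left two_ne_zero
      · rw [dfun_same (iff_of_false h1 h2)] at h
        simpa using h.symm
  · intro A hA
    rw [Submodule.mem_inf]
    refine ⟨⟨?_, ?_⟩, ?_⟩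
    · rw [Matrix.trace]
      apply Finset.sum_eq_zero
      intro p _
      exact hA p p (by simp only [TS1, Finset.mem_filter, Finset.mem_univ, true_and]; omega)
    · intro p q hpq hnle
      by_cases h : (p, q) ∈ TS1 n
      · exfalso
        apply hnle
        rw [hle]
        simp only [TS1, Finset.mem_filter, Finset.mem_univ, true_and] at h
        exact Or.inr ⟨by omega, Or.inr h.1⟩
      · exact hA p q h
    · rw [mem_eig_H0]
      intro p q
      rw [one_mul]
      by_cases h : (p, q) ∈ TS1 n
      · simp only [TS1, Finset.mem_filter, Finset.mem_univ, true_and] at h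
        rw [dfun_diff hn h.1 (by omega)]
        ring
      · rw [hA p q h]
        ring

lemma W0_eq (hn : 4 ≤ n)
    (hle : ∀ p q : Fin n, le p q ↔
      p = q ∨ (p.val < q.val ∧ (q.val ≤ n - 2 ∨ p.val < n / 2))) :
    gA le ⊓ Module.End.eigenspace (adE (H0 n)) 0
      = supM (TS0 n) ⊓ LinearMap.ker (Matrix.traceLinearMap (Fin n) ℂ ℂ) := by
  apply le_antisymm
  · intro A hA
    rw [Submodule.mem_inf] at hA
    obtain ⟨hg, he⟩ := hA
    obtain ⟨htr, hsupp⟩ := hg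
    rw [mem_eig_H0] at he
    rw [Submodule.mem_inf]
    constructor
    · intro p q hpq
      simp only [TS0, Finset.mem_filter, Finset.mem_univ, true_and, not_or] at hpq
      obtain ⟨hne, hc1, hc2⟩ := hpq
      have hvne : ¬ p.val = q.val := fun hv => hne (Fin.ext hv)
      by_cases hblk : (p.val < n / 2 ↔ q.val < n / 2)
      · apply hsupp p q hne
        rw [hle]
        simp only [Fin.ext_iff]
        omega
      · have h := he p q
        rw [zero_mul] at h
        by_cases h1 : p.val < n / 2
        · have h2 : ¬ q.val < n / 2 := by tauto
          rw [dfun_diff hn h1 h2] at h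
          simpa using h
        · have h2 : q.val < n / 2 := by tauto
          rw [dfun_diff' hn h1 h2] at h
          simpa using h
    · rw [LinearMap.mem_ker]
      exact htr
  · intro A hA
    rw [Submodule.mem_inf] at hA
    obtain ⟨hsup, hker⟩ := hA
    rw [Submodule.mem_inf]
    refine ⟨⟨?_, ?_⟩, ?_⟩
    · exact LinearMap.mem_ker.1 hker
    · intro p q hne hnle
      by_cases h : (p, q) ∈ TS0 n
      · exfalso
        apply hnle
        rw [hle]
        simp only [TS0, Finset.mem_filter, Finset.mem_univ, true_and] at h
        rcases h with h | h | h
        · exact Or.inl h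
        · exact Or.inr ⟨h.1, Or.inr (by omega)⟩
        · exact Or.inr ⟨h.2.1, Or.inl h.2.2⟩
      · exact hsup p q h
    · rw [mem_eig_H0]
      intro p q
      rw [zero_mul]
      by_cases h : (p, q) ∈ TS0 n
      · simp only [TS0, Finset.mem_filter, Finset.mem_univ, true_and] at h
        have hiff : (p.val < n / 2 ↔ q.val < n / 2) := by
          rcases h with h | h | h
          · rw [h]
          · omega
          · omega
        rw [dfun_same hiff, zero_mul]
      · rw [hsup p q h, mul_zero]

lemma sup_eq (hn : 4 ≤ n)
    (hle : ∀ p q : Fin n, le p q ↔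
      p = q ∨ (p.val < q.val ∧ (q.val ≤ n - 2 ∨ p.val < n / 2))) :
    (gA le ⊓ Module.End.eigenspace (adE (H0 n)) 0)
      ⊔ (gA le ⊓ Module.End.eigenspace (adE (H0 n)) 1) = gA le := by
  apply le_antisymm
  · exact sup_le inf_le_left inf_le_left
  · intro A hA
    obtain ⟨htr, hsupp⟩ := hA
    classical
    set A1 : M n := Matrix.of fun p q =>
      if p.val < n / 2 ∧ n / 2 ≤ q.val then A p q else 0 with hA1def
    have hA1mem : A1 ∈ gA le ⊓ Module.End.eigenspace (adE (H0 n)) 1 := by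
      rw [W1_eq hn hle]
      intro p q hpq
      simp only [TS1, Finset.mem_filter, Finset.mem_univ, true_and] at hpq
      exact if_neg hpq
    have hA0mem : A - A1 ∈ gA le ⊓ Module.End.eigenspace (adE (H0 n)) 0 := by
      rw [W0_eq hn hle]
      rw [Submodule.mem_inf]
      constructor
      · intro p q hpq
        rw [Matrix.sub_apply]
        by_cases hc : p.val < n / 2 ∧ n / 2 ≤ q.val
        · have e1 : A1 p q = A p q := if_pos hc
          rw [e1, sub_self]
        · have e1 : A1 p q = 0 := if_neg hc
          rw [e1, sub_zero]
          simp only [TS0, Finset.mem_filter, Finset.mem_univ, true_and, not_or] at hpq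
          obtain ⟨hne, hc1, hc2⟩ := hpq
          have hvne : ¬ p.val = q.val := fun hv => hne (Fin.ext hv)
          apply hsupp p q hne
          rw [hle]
          simp only [Fin.ext_iff]
          omega
      · rw [LinearMap.mem_ker]
        show Matrix.trace (A - A1) = 0
        rw [Matrix.trace_sub, htr]
        have htA1 : Matrix.trace A1 = 0 := by
          rw [Matrix.trace]
          apply Finset.sum_eq_zero
          intro p _
          show A1 p p = 0
          exact if_neg (by omega)
        rw [htA1, sub_zero]
    have hdec : A = (A - A1) + A1 := by abel
    rw [hdec]
    exact Submodule.add_mem_sup hA0mem hA1mem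

lemma inf_eq (hn : 4 ≤ n)
    (hle : ∀ p q : Fin n, le p q ↔
      p = q ∨ (p.val < q.val ∧ (q.val ≤ n - 2 ∨ p.val < n / 2))) :
    (gA le ⊓ Module.End.eigenspace (adE (H0 n)) 0)
      ⊓ (gA le ⊓ Module.End.eigenspace (adE (H0 n)) 1) = ⊥ := by
  rw [W0_eq hn hle, W1_eq hn hle, eq_bot_iff]
  intro A hA
  rw [Submodule.mem_inf, Submodule.mem_inf] at hA
  obtain ⟨⟨h0s, _⟩, h1s⟩ := hA
  rw [Submodule.mem_bot]
  ext p q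
  rw [Matrix.zero_apply]
  by_cases h : (p, q) ∈ TS1 n
  · apply h0s
    simp only [TS1, Finset.mem_filter, Finset.mem_univ, true_and] at h
    simp only [TS0, Finset.mem_filter, Finset.mem_univ, true_and, not_or, Fin.ext_iff]
    omega
  · exact h1s p q h

end SolutionEig


section SolutionCount

open Finset

variable {n : ℕ} {le : Fin n → Fin n → Prop}

lemma card_TS1 (hn : 4 ≤ n) (h0 : 0 < n) :
    (TS1 n).card = (n / 2) * (n - n / 2) := by
  have key : (TS1 n).card
      = ((Finset.range (n / 2)) ×ˢ (Finset.range (n - n / 2))).card := by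
    apply Finset.card_nbij' (fun pq => (pq.1.val, pq.2.val - n / 2))
      (fun ab => (fmk n h0 ab.1, fmk n h0 (ab.2 + n / 2)))
    · intro pq hpq
      simp only [Finset.mem_coe, TS1, Finset.mem_filter, Finset.mem_univ, true_and] at hpq
      simp only [Finset.mem_coe, Finset.mem_product, Finset.mem_range]
      have h2 := pq.2.isLt
      omega
    · intro ab hab
      simp only [Finset.mem_coe, Finset.mem_product, Finset.mem_range] at hab
      simp only [Finset.mem_coe, TS1, Finset.mem_filter, Finset.mem_univ, true_and]
      rw [fmk_val h0 (by omega), fmk_val h0 (by omega)]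
      exact ⟨hab.1, by show n / 2 ≤ ab.2 + n / 2; omega⟩
    · intro pq hpq
      simp only [Finset.mem_coe, TS1, Finset.mem_filter, Finset.mem_univ, true_and] at hpq
      have h2 := pq.2.isLt
      have e : pq.2.val - n / 2 + n / 2 = pq.2.val := by omega
      show (fmk n h0 pq.1.val, fmk n h0 (pq.2.val - n / 2 + n / 2)) = pq
      rw [e, fmk_val h0 pq.1.isLt, fmk_val h0 pq.2.isLt]
    · intro ab hab
      simp only [Finset.mem_coe, Finset.mem_product, Finset.mem_range] at hab
      show ((fmk n h0 ab.1).val, (fmk n h0 (ab.2 + n / 2)).val - n / 2) = ab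
      rw [fmk_val h0 (by omega), fmk_val h0 (by omega)]
      show (ab.1, ab.2 + n / 2 - n / 2) = ab
      rw [Nat.add_sub_cancel]
  rw [key, Finset.card_product, Finset.card_range, Finset.card_range]

lemma card_pairs (h0 : 0 < n) (lo hi : ℕ) (hhi : hi ≤ n) (hlo : lo ≤ hi) :
    2 * ((Finset.univ.filter fun pq : Fin n × Fin n =>
      lo ≤ pq.1.val ∧ pq.1.val < pq.2.val ∧ pq.2.val < hi)).card
    = (hi - lo) * (hi - lo - 1) := by
  have key : ((Finset.univ.filter fun pq : Fin n × Fin n =>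
      lo ≤ pq.1.val ∧ pq.1.val < pq.2.val ∧ pq.2.val < hi)).card
      = ((Finset.range (hi - lo)).sigma fun j => Finset.range j).card := by
    apply Finset.card_nbij' (fun pq => ⟨pq.2.val - lo, pq.1.val - lo⟩)
      (fun t => (fmk n h0 (t.2 + lo), fmk n h0 (t.1 + lo)))
    · intro pq hpq
      simp only [Finset.mem_coe, Finset.mem_filter, Finset.mem_univ, true_and] at hpq
      simp only [Finset.mem_coe, Finset.mem_sigma, Finset.mem_range]
      omega
    · intro t ht
      simp only [Finset.mem_coe, Finset.mem_sigma, Finset.mem_range] at ht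
      simp only [Finset.mem_coe, Finset.mem_filter, Finset.mem_univ, true_and]
      rw [fmk_val h0 (by omega), fmk_val h0 (by omega)]
      exact ⟨show lo ≤ t.2 + lo by omega, show t.2 + lo < t.1 + lo by omega,
        show t.1 + lo < hi by omega⟩
    · intro pq hpq
      simp only [Finset.mem_coe, Finset.mem_filter, Finset.mem_univ, true_and] at hpq
      show (fmk n h0 (pq.1.val - lo + lo), fmk n h0 (pq.2.val - lo + lo)) = pq
      have e1 : pq.1.val - lo + lo = pq.1.val := by omega
      have e2 : pq.2.val - lo + lo = pq.2.val := by omega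
      rw [e1, e2, fmk_val h0 pq.1.isLt, fmk_val h0 pq.2.isLt]
    · intro t ht
      simp only [Finset.mem_coe, Finset.mem_sigma, Finset.mem_range] at ht
      show (⟨(fmk n h0 (t.1 + lo)).val - lo, (fmk n h0 (t.2 + lo)).val - lo⟩
        : (_ : ℕ) × ℕ) = t
      rw [fmk_val h0 (by omega), fmk_val h0 (by omega)]
      show (⟨t.1 + lo - lo, t.2 + lo - lo⟩ : (_ : ℕ) × ℕ) = t
      rw [Nat.add_sub_cancel, Nat.add_sub_cancel]
  rw [key, Finset.card_sigma]
  simp only [Finset.card_range]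
  rw [mul_comm, Finset.sum_range_id_mul_two]

lemma card_TS0 (hn : 4 ≤ n) (h0 : 0 < n) :
    2 * (TS0 n).card = 2 * n + (n / 2) * (n / 2 - 1)
      + (n - 1 - n / 2) * (n - 1 - n / 2 - 1) := by
  have hsplit : TS0 n
      = (Finset.univ.filter fun pq : Fin n × Fin n => pq.1 = pq.2)
        ∪ ((Finset.univ.filter fun pq : Fin n × Fin n =>
            pq.1.val < pq.2.val ∧ pq.2.val < n / 2)
          ∪ (Finset.univ.filter fun pq : Fin n × Fin n =>
            n / 2 ≤ pq.1.val ∧ pq.1.val < pq.2.val ∧ pq.2.val ≤ n - 2)) := by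
    unfold TS0
    rw [Finset.filter_or, Finset.filter_or]
  have hd2 : Disjoint (Finset.univ.filter fun pq : Fin n × Fin n =>
        pq.1.val < pq.2.val ∧ pq.2.val < n / 2)
      (Finset.univ.filter fun pq : Fin n × Fin n =>
        n / 2 ≤ pq.1.val ∧ pq.1.val < pq.2.val ∧ pq.2.val ≤ n - 2) := by
    rw [Finset.disjoint_left]
    intro pq h1 h2
    simp only [Finset.mem_coe, Finset.mem_filter, Finset.mem_univ, true_and] at h1 h2
    omega
  have hd1 : Disjoint (Finset.univ.filter fun pq : Fin n × Fin n => pq.1 = pq.2)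
      ((Finset.univ.filter fun pq : Fin n × Fin n =>
          pq.1.val < pq.2.val ∧ pq.2.val < n / 2)
        ∪ (Finset.univ.filter fun pq : Fin n × Fin n =>
          n / 2 ≤ pq.1.val ∧ pq.1.val < pq.2.val ∧ pq.2.val ≤ n - 2)) := by
    rw [Finset.disjoint_left]
    intro pq h1 h2
    simp only [Finset.mem_coe, Finset.mem_filter, Finset.mem_univ, true_and] at h1
    simp only [Finset.mem_coe, Finset.mem_union, Finset.mem_filter, Finset.mem_univ, true_and] at h2
    have := congrArg Fin.val h1
    omega
  have hcd : (Finset.univ.filter fun pq : Fin n × Fin n => pq.1 = pq.2).card = n := by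
    have e : (Finset.univ.filter fun pq : Fin n × Fin n => pq.1 = pq.2).card
        = (Finset.univ : Finset (Fin n)).card := by
      apply Finset.card_nbij' (fun pq => pq.1) (fun p => (p, p))
      · intro a _
        exact Finset.mem_univ _
      · intro p _
        simp [Finset.mem_filter]
      · intro pq hpq
        simp only [Finset.mem_coe, Finset.mem_filter, Finset.mem_univ, true_and] at hpq
        exact Prod.ext rfl hpq
      · intro p _
        rfl
    rw [e, Finset.card_univ, Fintype.card_fin]
  have hc1 : 2 * (Finset.univ.filter fun pq : Fin n × Fin n =>
      pq.1.val < pq.2.val ∧ pq.2.val < n / 2).card = (n / 2) * (n / 2 - 1) := by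
    have hfe : (Finset.univ.filter fun pq : Fin n × Fin n =>
        pq.1.val < pq.2.val ∧ pq.2.val < n / 2)
        = (Finset.univ.filter fun pq : Fin n × Fin n =>
          0 ≤ pq.1.val ∧ pq.1.val < pq.2.val ∧ pq.2.val < n / 2) := by
      apply Finset.filter_congr
      intro pq _
      omega
    rw [hfe]
    have hcp := card_pairs h0 0 (n / 2) (by omega) (by omega)
    simpa using hcp
  have hc2 : 2 * (Finset.univ.filter fun pq : Fin n × Fin n =>
      n / 2 ≤ pq.1.val ∧ pq.1.val < pq.2.val ∧ pq.2.val ≤ n - 2).card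
      = (n - 1 - n / 2) * (n - 1 - n / 2 - 1) := by
    have hfe : (Finset.univ.filter fun pq : Fin n × Fin n =>
        n / 2 ≤ pq.1.val ∧ pq.1.val < pq.2.val ∧ pq.2.val ≤ n - 2)
        = (Finset.univ.filter fun pq : Fin n × Fin n =>
          n / 2 ≤ pq.1.val ∧ pq.1.val < pq.2.val ∧ pq.2.val < n - 1) := by
      apply Finset.filter_congr
      intro pq _
      omega
    rw [hfe]
    exact card_pairs h0 (n / 2) (n - 1) (by omega) (by omega)
  rw [hsplit, Finset.card_union_of_disjoint hd1, Finset.card_union_of_disjoint hd2, hcd,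
    mul_add, mul_add, hc1, hc2]
  ring

lemma finrank_inf_ker (V : Submodule ℂ (M n)) (τ : M n →ₗ[ℂ] ℂ)
    (hτ : ∃ A ∈ V, τ A = 1) :
    Module.finrank ℂ ↥(V ⊓ LinearMap.ker τ) + 1 = Module.finrank ℂ ↥V := by
  have hrange : LinearMap.range (τ.comp V.subtype) = ⊤ := by
    rw [eq_top_iff]
    intro c _
    obtain ⟨A, hA, hA1⟩ := hτ
    refine ⟨c • ⟨A, hA⟩, ?_⟩
    show τ (c • A) = c
    rw [map_smul, hA1, smul_eq_mul, mul_one]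
  have hrn := LinearMap.finrank_range_add_finrank_ker (τ.comp V.subtype)
  rw [hrange, finrank_top, Module.finrank_self] at hrn
  have heq : Module.finrank ℂ ↥(V ⊓ LinearMap.ker τ)
      = Module.finrank ℂ ↥(LinearMap.ker (τ.comp V.subtype)) := by
    refine LinearEquiv.finrank_eq ?_
    exact {
      toFun := fun A => ⟨⟨A.1, (Submodule.mem_inf.1 A.2).1⟩, by
        have h2 := (Submodule.mem_inf.1 A.2).2
        rw [LinearMap.mem_ker] at h2 ⊢
        exact h2⟩
      invFun := fun B => ⟨B.1.1, Submodule.mem_inf.2 ⟨B.1.2, by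
        have h2 := B.2
        rw [LinearMap.mem_ker] at h2 ⊢
        exact h2⟩⟩
      map_add' := fun _ _ => rfl
      map_smul' := fun _ _ => rfl
      left_inv := fun _ => rfl
      right_inv := fun _ => rfl }
  rw [heq]
  omega

lemma TS0_witness (hn : 4 ≤ n) (h0 : 0 < n) :
    ∃ A ∈ supM (TS0 n), Matrix.traceLinearMap (Fin n) ℂ ℂ A = 1 := by
  refine ⟨Matrix.single ⟨0, h0⟩ ⟨0, h0⟩ 1, ?_, ?_⟩
  · intro p q hpq
    apply Matrix.single_apply_of_ne
    rintro ⟨rfl, rfl⟩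
    exact hpq (by
      simp only [TS0, Finset.mem_filter, Finset.mem_univ, true_and]
      exact Or.inl trivial)
  · rw [Matrix.traceLinearMap_apply, Matrix.trace,
      Finset.sum_eq_single_of_mem (⟨0, h0⟩ : Fin n) (Finset.mem_univ _)]
    · exact Matrix.single_apply_same _ _ _
    · intro j _ hj
      exact Matrix.single_apply_of_ne _ _ _ _ _ (fun hc => hj hc.1.symm)

end SolutionCount

/-- for `n ≥ 4`, the poset `P_{4,n}` (`p₁ ≼ ⋯ ≼ p_{n-1}` together
with `p_{⌊n/2⌋} ≼ p_n`, elements `pᵢ` indexed as `i - 1 : Fin n`) with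
`F = ∑_{i=1}^{⌊(n-1)/2⌋} E*_{p_i,p_{n-i}} + ∑_{i=1}^{⌊n/2⌋} E*_{p_i,p_n}`:
`F` is Frobenius on `g_A(P_{4,n})` and the spectrum is binary, with eigenvalues
`0` and `1` each of multiplicity `(n²-1)/4` for odd `n` and `n²/4` for even `n`. -/
theorem P4n_frobenius_binary_spectrum
    (n : ℕ) (hn : 4 ≤ n)
    (le : Fin n → Fin n → Prop)
    (hle : ∀ p q : Fin n, le p q ↔
      p = q ∨ (p.val < q.val ∧ (q.val ≤ n - 2 ∨ p.val < n / 2)))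
    (S : Finset (Fin n × Fin n))
    (hS : S =
      ((Finset.Icc 1 ((n - 1) / 2)).image fun i =>
        (fmk n (by omega) (i - 1), fmk n (by omega) (n - i - 1))) ∪
      ((Finset.Icc 1 (n / 2)).image fun i =>
        (fmk n (by omega) (i - 1), fmk n (by omega) (n - 1)))) :
    IsFrobeniusOn (gA le) (FS S) ∧
    ∀ H : M n, IsPrincipal (gA le) (FS S) H →
      eigMult (gA le) H 0 = eigMult (gA le) H 1 ∧
      eigMult (gA le) H 0 + eigMult (gA le) H 1 = Module.finrank ℂ ↥(gA le) ∧
      (Odd n → 4 * eigMult (gA le) H 0 = n ^ 2 - 1) ∧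
      (Even n → 4 * eigMult (gA le) H 0 = n ^ 2) := by
  have h0 : (0 : ℕ) < n := by omega
  have hfrob : IsFrobeniusOn (gA le) (FS S) := frob_aux hn h0 hle S hS
  refine ⟨hfrob, ?_⟩
  intro H hH
  have hHeq : H = H0 n := principal_unique hn h0 hle S hS H hH
  subst hHeq
  have e1 : eigMult (gA le) (H0 n) 1 = (n / 2) * (n - n / 2) := by
    unfold eigMult
    rw [W1_eq hn hle, finrank_supM, card_TS1 hn h0]
  have e0 : eigMult (gA le) (H0 n) 0 = (n / 2) * (n - n / 2) := by
    unfold eigMult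
    rw [W0_eq hn hle]
    have hfk := finrank_inf_ker (supM (TS0 n)) (Matrix.traceLinearMap (Fin n) ℂ ℂ)
      (TS0_witness hn h0)
    rw [finrank_supM] at hfk
    have hcard := card_TS0 hn h0
    have hkey : 2 * ((n / 2) * (n - n / 2) + 1)
        = 2 * n + (n / 2) * (n / 2 - 1) + (n - 1 - n / 2) * (n - 1 - n / 2 - 1) := by
      rcases Nat.even_or_odd n with he | ho
      · obtain ⟨k, hk⟩ := he
        subst hk
        obtain ⟨j, hj⟩ : ∃ j, k = j + 2 := ⟨k - 2, by omega⟩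
        subst hj
        rw [show (j + 2 + (j + 2)) / 2 = j + 2 from by omega,
          show j + 2 + (j + 2) - (j + 2) = j + 2 from by omega,
          show j + 2 - 1 = j + 1 from by omega,
          show j + 2 + (j + 2) - 1 - (j + 2) = j + 1 from by omega,
          show j + 1 - 1 = j from by omega]
        ring
      · obtain ⟨k, hk⟩ := ho
        subst hk
        obtain ⟨j, hj⟩ : ∃ j, k = j + 2 := ⟨k - 2, by omega⟩
        subst hj
        rw [show (2 * (j + 2) + 1) / 2 = j + 2 from by omega,
          show 2 * (j + 2) + 1 - (j + 2) = j + 3 from by omega,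
          show j + 2 - 1 = j + 1 from by omega,
          show 2 * (j + 2) + 1 - 1 - (j + 2) = j + 2 from by omega,
          show j + 2 - 1 = j + 1 from by omega]
        ring
    have h2 : 2 * (Module.finrank ℂ
        ↥(supM (TS0 n) ⊓ LinearMap.ker (Matrix.traceLinearMap (Fin n) ℂ ℂ)) + 1)
        = 2 * ((n / 2) * (n - n / 2) + 1) := by
      rw [hfk, hcard]
      exact hkey.symm
    have h3 := Nat.eq_of_mul_eq_mul_left (by norm_num : 0 < 2) h2
    omega
  refine ⟨e0.trans e1.symm, ?_, ?_, ?_⟩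
  · have hsum := Submodule.finrank_sup_add_finrank_inf_eq
      (gA le ⊓ Module.End.eigenspace (adE (H0 n)) 0)
      (gA le ⊓ Module.End.eigenspace (adE (H0 n)) 1)
    rw [sup_eq hn hle, inf_eq hn hle, finrank_bot, add_zero] at hsum
    exact hsum.symm
  · intro hodd
    obtain ⟨k, hk⟩ := hodd
    rw [e0]
    subst hk
    rw [show (2 * k + 1) / 2 = k from by omega,
      show 2 * k + 1 - k = k + 1 from by omega,
      show (2 * k + 1) ^ 2 = 4 * (k * (k + 1)) + 1 from by ring,
      Nat.add_sub_cancel]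
  · intro heven
    obtain ⟨k, hk⟩ := heven
    rw [e0]
    subst hk
    rw [show (k + k) / 2 = k from by omega, show k + k - k = k from by omega]
    ring

end
end LiePosets
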